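/- For a nontrivial ring R and a preorder θ on Fin n, θ is a partial order if and only if M_n(θ,R) is an intersection of a (nonempty) family of permutation conjugates of the ring of upper triangular matrices. -/

import Mathlib

section aux

variable {R : Type*} [Ring R] {n : ℕ}

lemma conj_eq_submatrix (σ : Equiv.Perm (Fin n)) (A : Matrix (Fin n) (Fin n) R) :
    σ.permMatrix R * A * (σ⁻¹).permMatrix R = A.submatrix σ σ := by
  rw [Equiv.Perm.permMatrix, Equiv.Perm.permMatrix, PEquiv.toMatrix_toPEquiv_mul,
    PEquiv.mul_toMatrix_toPEquiv]
  ext i j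
  simp [Matrix.submatrix_apply, Equiv.Perm.inv_def]

lemma mem_conj_iff (σ : Equiv.Perm (Fin n)) (B : Matrix (Fin n) (Fin n) R) :
    (∃ A ∈ {A : Matrix (Fin n) (Fin n) R | ∀ i j, A i j ≠ 0 → i ≤ j},
      B = σ.permMatrix R * A * (σ⁻¹).permMatrix R) ↔ ∀ i j, B i j ≠ 0 → σ i ≤ σ j := by
  constructor
  · rintro ⟨A, hA, rfl⟩ i j h
    rw [conj_eq_submatrix] at h
    exact hA _ _ h
  · intro h
    refine ⟨B.submatrix σ.symm σ.symm, fun i j hij => ?_, ?_⟩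
    · have := h _ _ hij
      simpa using this
    · rw [conj_eq_submatrix]
      ext i j
      simp

lemma exists_perm_of_isLinearOrder {α : Type*} [Fintype α] (r : α → α → Prop)
    (h : IsLinearOrder α r) {m : ℕ} (hc : Fintype.card α = m) :
    ∃ σ : α ≃ Fin m, ∀ i j, r i j ↔ σ i ≤ σ j := by
  letI : LinearOrder α :=
    { le := r
      le_refl := h.refl
      le_trans := h.trans
      le_antisymm := h.antisymm
      le_total := h.total
      toDecidableLE := Classical.decRel r }
  refine ⟨(monoEquivOfFin α hc).symm.toEquiv, fun i j => ?_⟩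
  exact ((monoEquivOfFin α hc).symm.le_iff_le).symm

end aux

theorem structural_matrix_ring_order_iff_intersection_conjugates_upper
    (R : Type*) [Ring R] [Nontrivial R] (n : ℕ) (hn : 1 ≤ n)
    (θ : Fin n → Fin n → Prop) (hr : Reflexive θ) (ht : Transitive θ) :
    (∀ i j, θ i j → θ j i → i = j) ↔
      ∃ (ι : Type) (_ : Nonempty ι) (f : ι → Equiv.Perm (Fin n)),
        {A : Matrix (Fin n) (Fin n) R | ∀ i j, A i j ≠ 0 → θ i j} =
          ⋂ s : ι,
            {B : Matrix (Fin n) (Fin n) R |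
              ∃ A ∈ {A : Matrix (Fin n) (Fin n) R | ∀ i j, A i j ≠ 0 → i ≤ j},
                B = (f s).permMatrix R * A * ((f s)⁻¹).permMatrix R} := by
  constructor
  · intro hanti
    -- For each pair p, construct a linear extension of θ separating p if possible.
    have key : ∀ p : Fin n × Fin n, ∃ σ : Equiv.Perm (Fin n),
        (∀ i j, θ i j → σ i ≤ σ j) ∧ (¬ θ p.1 p.2 → ¬ (σ p.1 ≤ σ p.2)) := by
      rintro ⟨a, b⟩
      by_cases hab : θ a b
      · -- extend θ itself
        haveI : IsRefl (Fin n) θ := ⟨hr⟩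
        haveI : IsTrans (Fin n) θ := ⟨fun _ _ _ h1 h2 => ht h1 h2⟩
        haveI : IsAntisymm (Fin n) θ := ⟨hanti⟩
        haveI : IsPreorder (Fin n) θ := ⟨⟩
        haveI : IsPartialOrder (Fin n) θ := ⟨⟩
        obtain ⟨s, hs, hles⟩ := extend_partialOrder θ
        obtain ⟨e, he⟩ := exists_perm_of_isLinearOrder s hs (Fintype.card_fin n)
        refine ⟨Equiv.trans e (finCongr rfl), fun i j hij => ?_, fun h => absurd hab h⟩
        simpa using (he i j).mp (hles _ _ hij)
      · -- extend θ ∪ {(b,a)}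
        set r : Fin n → Fin n → Prop := fun x y => θ x y ∨ (θ x b ∧ θ a y) with hrdef
        haveI : IsRefl (Fin n) r := ⟨fun x => Or.inl (hr x)⟩
        haveI : IsTrans (Fin n) r := by
          constructor
          rintro x y z (hxy | ⟨hxb, hay⟩) (hyz | ⟨hyb, haz⟩)
          · exact Or.inl (ht hxy hyz)
          · exact Or.inr ⟨ht hxy hyb, haz⟩
          · exact Or.inr ⟨hxb, ht hay hyz⟩
          · exact absurd (ht hay hyb) hab
        haveI : IsAntisymm (Fin n) r := by
          constructor
          rintro x y (hxy | ⟨hxb, hay⟩) (hyx | ⟨hyb, hax⟩)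
          · exact hanti _ _ hxy hyx
          · exact absurd (ht hax (ht hxy hyb)) hab
          · exact absurd (ht hay (ht hyx hxb)) hab
          · exact absurd (ht hax hxb) hab
        haveI : IsPreorder (Fin n) r := ⟨⟩
        haveI : IsPartialOrder (Fin n) r := ⟨⟩
        obtain ⟨s, hs, hles⟩ := extend_partialOrder r
        obtain ⟨e, he⟩ := exists_perm_of_isLinearOrder s hs (Fintype.card_fin n)
        refine ⟨e, fun i j hij => (he i j).mp (hles _ _ (Or.inl hij)), fun _ hle => ?_⟩
        have hba : s b a := hles _ _ (Or.inr ⟨hr b, hr a⟩)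
        have hsab : s a b := (he a b).mpr hle
        have : a = b := hs.antisymm _ _ hsab hba
        exact hab (this ▸ hr a)
    choose f hf1 hf2 using key
    refine ⟨Fin n × Fin n, ⟨(⟨0, hn⟩, ⟨0, hn⟩)⟩, f, ?_⟩
    ext A
    simp only [Set.mem_setOf_eq, Set.mem_iInter]
    constructor
    · intro hA p
      exact (mem_conj_iff (f p) A).mpr fun i j hij => hf1 p i j (hA i j hij)
    · intro hA i j hij
      by_contra hθ
      have := (mem_conj_iff (f (i, j)) A).mp (hA (i, j)) i j hij
      exact hf2 (i, j) hθ this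
  · rintro ⟨ι, ⟨s₀⟩, f, hEq⟩ i j hij hji
    by_contra hne
    -- the matrix with ones at (i,j) and (j,i)
    set A : Matrix (Fin n) (Fin n) R :=
      Matrix.single i j 1 + Matrix.single j i 1 with hAdef
    have e1 : Matrix.single j i (1 : R) i j = 0 :=
      Matrix.single_apply_of_ne _ _ _ _ _ (fun h => hne h.1.symm)
    have e2 : Matrix.single i j (1 : R) j i = 0 :=
      Matrix.single_apply_of_ne _ _ _ _ _ (fun h => hne h.1)
    have hAij : A i j ≠ 0 := by
      simp [hAdef, Matrix.add_apply, Matrix.single_apply_same, e1]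
    have hAji : A j i ≠ 0 := by
      simp [hAdef, Matrix.add_apply, Matrix.single_apply_same, e2]
    have hmem : A ∈ {A : Matrix (Fin n) (Fin n) R | ∀ i j, A i j ≠ 0 → θ i j} := by
      intro a b hab
      by_cases h1 : a = i ∧ b = j
      · exact h1.1 ▸ h1.2 ▸ hij
      by_cases h2 : a = j ∧ b = i
      · exact h2.1 ▸ h2.2 ▸ hji
      · exfalso
        apply hab
        simp only [hAdef, Matrix.add_apply]
        rw [Matrix.single_apply_of_ne _ _ _ _ _ (fun h => h1 ⟨h.1.symm, h.2.symm⟩),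
          Matrix.single_apply_of_ne _ _ _ _ _ (fun h => h2 ⟨h.1.symm, h.2.symm⟩),
          add_zero]
    rw [hEq] at hmem
    have hmem' := Set.mem_iInter.mp hmem s₀
    have h := (mem_conj_iff (f s₀) A).mp hmem'
    have h1 := h i j hAij
    have h2 := h j i hAji
    exact hne ((f s₀).injective (le_antisymm h1 h2))
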